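/- Let e >= 3 and let r be a positive integer. Let m be the largest integer such that m + C(m+e-3, e-1) <= r. Then there exist nonnegative integers a_{e-2} >= a_{e-3} >= ... >= a_1 >= 0, where the inequalities are strict among the positive a_i's, such that r = m + C(m+e-3, e-1) + C(a_{e-2}, e-2) + C(a_{e-3}, e-3) + ... + C(a_1, 1), and moreover a_{e-2} <= m + e - 3 (so each a_i is O(m) as r grows). -/

import Mathlib

open Finset

def myG (d t : ℕ) : ℕ := Nat.findGreatest (fun a => Nat.choose a t ≤ d) (d + t)

lemma my_lt_choose (d t : ℕ) (ht : 1 ≤ t) : d < Nat.choose (d + t) t := by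
  induction d with
  | zero => simpa using Nat.choose_pos (le_refl t)
  | succ d ih =>
    obtain ⟨s, rfl⟩ : ∃ s, t = s + 1 := ⟨t - 1, by omega⟩
    have hpos : 0 < Nat.choose (d + (s+1)) s := Nat.choose_pos (by omega)
    have : Nat.choose (d + 1 + (s + 1)) (s + 1)
        = Nat.choose (d + (s+1)) s + Nat.choose (d + (s+1)) (s+1) := by
      have : d + 1 + (s + 1) = (d + (s + 1)) + 1 := by omega
      rw [this, Nat.choose_succ_succ']
    omega

lemma myG_spec (d t : ℕ) (ht : 1 ≤ t) : Nat.choose (myG d t) t ≤ d := by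
  rw [myG]
  apply Nat.findGreatest_spec (P := fun a => Nat.choose a t ≤ d) (m := 0) (Nat.zero_le _)
  obtain ⟨s, rfl⟩ : ∃ s, t = s + 1 := ⟨t - 1, by omega⟩
  simp

lemma myG_lt (d t : ℕ) (ht : 1 ≤ t) : d < Nat.choose (myG d t + 1) t := by
  by_cases h : myG d t + 1 ≤ d + t
  · have := Nat.findGreatest_is_greatest (P := fun a => Nat.choose a t ≤ d)
      (Nat.lt_succ_self (myG d t)) h
    simp only [Nat.succ_eq_add_one] at this
    rw [myG] at this ⊢
    omega
  · have hle : myG d t ≤ d + t := Nat.findGreatest_le _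
    have heq : myG d t = d + t := by omega
    have h1 : d < Nat.choose (d + t) t := my_lt_choose d t ht
    have h2 : Nat.choose (d + t) t ≤ Nat.choose (d + t + 1) t :=
      Nat.choose_le_choose _ (by omega)
    rw [heq]; omega

lemma myG_one (d : ℕ) : myG d 1 = d := by
  apply le_antisymm
  · have := myG_spec d 1 le_rfl
    simpa using this
  · exact Nat.le_findGreatest (by omega) (by simp)

lemma myG_step (d t : ℕ) (ht : 2 ≤ t) :
    myG (d - Nat.choose (myG d t) t) (t - 1) < myG d t := by
  set G := myG d t with hG
  have h1 : Nat.choose G t ≤ d := myG_spec d t (by omega)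
  have h2 : d < Nat.choose (G + 1) t := myG_lt d t (by omega)
  have hp : Nat.choose (G + 1) t = Nat.choose G (t - 1) + Nat.choose G t := by
    obtain ⟨s, rfl⟩ : ∃ s, t = s + 1 := ⟨t - 1, by omega⟩
    simp [Nat.choose_succ_succ']
  have h3 : d - Nat.choose G t < Nat.choose G (t - 1) := by omega
  by_contra h
  push_neg at h
  have h4 := myG_spec (d - Nat.choose G t) (t - 1) (by omega)
  have h5 := Nat.choose_le_choose (t - 1) h
  omega

def myRem (d k : ℕ) : ℕ → ℕ
  | 0 => d
  | j + 1 => myRem d k j - Nat.choose (myG (myRem d k j) (k - j)) (k - j)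

/-- **Lemma (decomposition of `r`).** Let `e ≥ 3` and let `r` be a positive integer. Let `m`
be the largest integer with `m + C(m+e-3, e-1) ≤ r`. Then there are nonnegative integers
`a_{e-2} ≥ a_{e-3} ≥ ⋯ ≥ a_1 ≥ 0` (the inequalities being strict among the positive ones)
with `r = m + C(m+e-3, e-1) + C(a_{e-2}, e-2) + ⋯ + C(a_1, 1)`, and moreover
`a_{e-2} ≤ m + e - 3` (so each `a_t` is `O(m)` as `r` grows). -/
theorem stmt_11 (e : ℕ) (he : 3 ≤ e) (r : ℕ) (hr : 1 ≤ r) (m : ℕ)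
    (hm : m + Nat.choose (m + e - 3) (e - 1) ≤ r)
    (hmax : ∀ m' : ℕ, m' + Nat.choose (m' + e - 3) (e - 1) ≤ r → m' ≤ m) :
    ∃ a : ℕ → ℕ,
      (∀ s t : ℕ, 1 ≤ s → s ≤ t → t ≤ e - 2 → a s ≤ a t) ∧
      (∀ s t : ℕ, 1 ≤ s → s < t → t ≤ e - 2 → 0 < a s → a s < a t) ∧
      r = m + Nat.choose (m + e - 3) (e - 1) + ∑ t ∈ Finset.Icc 1 (e - 2), Nat.choose (a t) t ∧
      a (e - 2) ≤ m + e - 3 := by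
  obtain ⟨f, rfl⟩ : ∃ f, e = f + 3 := ⟨e - 3, by omega⟩
  set k := f + 1 with hk
  have hm' : m + Nat.choose (m + f) (f + 2) ≤ r := hm
  set d := r - (m + Nat.choose (m + f) (f + 2)) with hd
  have hrd : r = m + Nat.choose (m + f) (f + 2) + d := by omega
  -- bound on d from maximality
  have hdb : d ≤ Nat.choose (m + f) (f + 1) := by
    by_contra h
    push_neg at h
    have hP : Nat.choose (m + f + 1) (f + 2)
        = Nat.choose (m + f) (f + 1) + Nat.choose (m + f) (f + 2) :=
      Nat.choose_succ_succ' (m + f) (f + 1)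
    have hle : (m + 1) + Nat.choose (m + 1 + f) (f + 2) ≤ r := by
      have he1 : m + 1 + f = m + f + 1 := by omega
      rw [he1, hP]; omega
    have := hmax (m + 1) hle
    omega
  set A := fun t => myG (myRem d k (k - t)) t with hA
  -- strict increase at consecutive indices
  have strict : ∀ t, 2 ≤ t → t ≤ k → A (t - 1) < A t := by
    intro t h2 htk
    have e1 : k - (t - 1) = (k - t) + 1 := by omega
    have e2 : k - (k - t) = t := by omega
    show myG (myRem d k (k - (t - 1))) (t - 1) < myG (myRem d k (k - t)) t
    rw [e1]
    simp only [myRem]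
    rw [e2]
    exact myG_step _ t h2
  have mono : ∀ t s, 1 ≤ s → s < t → t ≤ k → A s < A t := by
    intro t
    induction t with
    | zero => intro s _ h _; omega
    | succ t ih =>
      intro s hs hst htk
      have hstep : A t < A (t + 1) := by
        have := strict (t + 1) (by omega) htk
        simpa using this
      rcases Nat.lt_or_ge s t with h | h
      · exact lt_trans (ih s hs h (by omega)) hstep
      · have : s = t := by omega
        subst this; exact hstep
  -- telescoping sum
  have sumlem : ∀ j, j ≤ k → myRem d k j + ∑ t ∈ Icc (k - j + 1) k, Nat.choose (A t) t = d := by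
    intro j
    induction j with
    | zero =>
      intro _
      rw [Finset.Icc_eq_empty (by omega)]
      simp [myRem]
    | succ j ih =>
      intro hj
      have ihj := ih (by omega)
      have e0 : k - (j + 1) + 1 = k - j := by omega
      have e1 : Icc (k - j) k = Finset.cons (k - j) (Ioc (k - j) k)
          (by simp) := Finset.Icc_eq_cons_Ioc (by omega)
      have e2 : Ioc (k - j) k = Icc (k - j + 1) k := by
        rw [← Finset.Icc_add_one_left_eq_Ioc]
      have e3 : A (k - j) = myG (myRem d k j) (k - j) := by
        show myG (myRem d k (k - (k - j))) (k - j) = _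
        rw [show k - (k - j) = j from by omega]
      have hspec : Nat.choose (myG (myRem d k j) (k - j)) (k - j) ≤ myRem d k j :=
        myG_spec _ _ (by omega)
      rw [e0, e1, Finset.sum_cons, e2, e3]
      simp only [myRem]
      omega
  have hzero : myRem d k k = 0 := by
    show myRem d k (f + 1) = 0
    simp only [myRem]
    rw [show k - f = 1 from by omega, myG_one, Nat.choose_one_right]
    omega
  have hsum : ∑ t ∈ Icc 1 k, Nat.choose (A t) t = d := by
    have := sumlem k le_rfl
    rw [show k - k + 1 = 1 from by omega] at this
    omega
  -- bound on the top digit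
  have hAk : A k = myG d k := by
    show myG (myRem d k (k - k)) k = _
    rw [Nat.sub_self]
    rfl
  have hbound : A k ≤ m + f := by
    by_contra h
    push_neg at h
    have h1 : Nat.choose (A k) (f + 1) ≤ d := by
      rw [hAk]; exact myG_spec d k (by omega)
    have h2 : Nat.choose (m + f + 1) (f + 1) ≤ Nat.choose (A k) (f + 1) :=
      Nat.choose_le_choose _ (by omega)
    have h3 : Nat.choose (m + f + 1) (f + 1)
        = Nat.choose (m + f) f + Nat.choose (m + f) (f + 1) :=
      Nat.choose_succ_succ' (m + f) f
    have h4 : 0 < Nat.choose (m + f) f := Nat.choose_pos (by omega)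
    omega
  refine ⟨A, ?_, ?_, ?_, ?_⟩
  · intro s t hs hst htk
    rcases eq_or_lt_of_le hst with h | h
    · rw [h]
    · exact (mono t s hs h (by omega)).le
  · intro s t hs hst htk _
    exact mono t s hs hst (by omega)
  · show r = m + Nat.choose (m + f) (f + 2) + ∑ t ∈ Icc 1 k, Nat.choose (A t) t
    rw [hsum]; exact hrd
  · exact hbound
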